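/- Let R = ℂ[t^α | 0 < α ∈ ℝ] and let N = R/(ℂ·t + R·t), the quotient of R by the subspace spanned by t together with all products r·t (N has basis t^α for α ∈ (0,1)). Then the canonical map R ⊗_R N → N is surjective but not injective: the class of t^{1/2} ⊗ t^{1/2} is a nonzero element of its kernel. In particular N is not a smooth R-module. -/

import Mathlib

open TensorProduct LinearMap

/-- The additive semigroup of positive real exponents. -/
abbrev PosReal := {x : ℝ // 0 < x}

/-- `R = ℂ[t^α | 0 < α ∈ ℝ]`. -/
abbrev Rpos := AddMonoidAlgebra ℂ PosReal

/-- The element `t = t^1`. -/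
noncomputable def tElt : Rpos := AddMonoidAlgebra.single ⟨1, one_pos⟩ 1

/-- The element `t^{1/2}`. -/
noncomputable def tHalf : Rpos := AddMonoidAlgebra.single ⟨1/2, by norm_num⟩ 1

/-- The subspace `ℂ·t + R·t` of `R`. -/
noncomputable def Jsub : Submodule ℂ Rpos :=
  Submodule.span ℂ ({tElt} ∪ Set.range fun r : Rpos => r * tElt)

/-- `N = R/(ℂ·t + R·t)`, the maximal quotient of `R` in which `t` acts as `0`. -/
noncomputable abbrev Nquot := Rpos ⧸ Jsub

/-- The bar differential `R ⊗ R ⊗ N → R ⊗ N` for a module structure given by a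
bilinear action map `act`. -/
noncomputable def barDM (act : Rpos →ₗ[ℂ] Nquot →ₗ[ℂ] Nquot) :
    (Rpos ⊗[ℂ] (Rpos ⊗[ℂ] Nquot)) →ₗ[ℂ] Rpos ⊗[ℂ] Nquot :=
  (rTensor Nquot (mul' ℂ Rpos)) ∘ₗ (TensorProduct.assoc ℂ Rpos Rpos Nquot).symm.toLinearMap
    - lTensor Rpos (TensorProduct.lift act)

/-- Evaluation of the coefficient at exponent `1`. -/
noncomputable def ev1 : Rpos →ₗ[ℂ] ℂ where
  toFun f := f.coeff ⟨1, one_pos⟩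
  map_add' _ _ := rfl
  map_smul' _ _ := rfl

lemma mul_tElt_apply (s : Rpos) : ev1 (s * tElt) = 0 := by
  have h : (⟨1, one_pos⟩ : PosReal) ∉ (s * tElt).coeff.support := by
    rw [Finsupp.notMem_support_iff, tElt]
    apply AddMonoidAlgebra.coeff_mul_single_of_forall_add_ne
    intro a hab
    have : a.1 + 1 = 1 := congrArg Subtype.val hab
    have := a.2
    linarith
  exact Finsupp.notMem_support_iff.mp h

/-- The bilinear pairing `P f g = (f*g)(t^1)` on `R`. -/
noncomputable def Ppair : Rpos →ₗ[ℂ] Rpos →ₗ[ℂ] ℂ :=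
  (LinearMap.mul ℂ Rpos).compr₂ ev1

lemma Jsub_le_ker (r : Rpos) : Jsub ≤ ker (Ppair r) := by
  rw [Jsub, Submodule.span_le]
  rintro x (hx | ⟨s, rfl⟩)
  · rcases hx with rfl
    simpa [Ppair] using mul_tElt_apply r
  · have : r * (s * tElt) = (r * s) * tElt := (mul_assoc r s tElt).symm
    simp only [SetLike.mem_coe, LinearMap.mem_ker, Ppair, LinearMap.compr₂_apply,
      LinearMap.mul_apply', this]
    exact mul_tElt_apply (r * s)

/-- The pairing descends to `N` in the second variable. -/
noncomputable def Pfam : Rpos →ₗ[ℂ] Nquot →ₗ[ℂ] ℂ where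
  toFun r := Jsub.liftQ (Ppair r) (Jsub_le_ker r)
  map_add' r s := by
    apply Submodule.linearMap_qext
    ext x
    simp [map_add]
  map_smul' c r := by
    apply Submodule.linearMap_qext
    ext x
    simp

lemma Pfam_mkQ (r x : Rpos) : Pfam r (Jsub.mkQ x) = ev1 (r * x) := rfl

/-- The functional `φ : R ⊗ N → ℂ`. -/
noncomputable def phi : (Rpos ⊗[ℂ] Nquot) →ₗ[ℂ] ℂ := TensorProduct.lift Pfam

lemma phi_tmul (r x : Rpos) : phi (r ⊗ₜ[ℂ] Jsub.mkQ x) = ev1 (r * x) := rfl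

lemma phi_barDM (act : Rpos →ₗ[ℂ] Nquot →ₗ[ℂ] Nquot)
    (hact : ∀ (r x : Rpos), act r (Jsub.mkQ x) = Jsub.mkQ (r * x)) :
    ∀ z, phi (barDM act z) = 0 := by
  intro z
  induction z using TensorProduct.induction_on with
  | zero => simp
  | add u v hu hv => rw [map_add, map_add, hu, hv, add_zero]
  | tmul a w =>
    induction w using TensorProduct.induction_on with
    | zero => simp
    | add u v hu hv =>
        rw [tmul_add, map_add, map_add, hu, hv, add_zero]
    | tmul b n =>
        obtain ⟨x, rfl⟩ := Jsub.mkQ_surjective n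
        simp only [barDM, LinearMap.sub_apply, LinearMap.coe_comp, Function.comp_apply,
          LinearEquiv.coe_coe, TensorProduct.assoc_symm_tmul, rTensor_tmul,
          lTensor_tmul, map_sub, mul'_apply, TensorProduct.lift.tmul, hact]
        rw [phi_tmul, phi_tmul, mul_assoc, sub_self]

lemma tHalf_mul_tHalf : tHalf * tHalf = tElt := by
  rw [tHalf, tElt, AddMonoidAlgebra.single_mul_single]
  norm_num
  congr 1
  ext
  norm_num

lemma phi_half : phi (tHalf ⊗ₜ[ℂ] Jsub.mkQ tHalf) = 1 := by
  rw [phi_tmul, tHalf_mul_tHalf, tElt]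
  exact Finsupp.single_eq_same

lemma tElt_mem_Jsub : tElt ∈ Jsub := by
  apply Submodule.subset_span
  left; rfl

lemma lift_act_surjective (act : Rpos →ₗ[ℂ] Nquot →ₗ[ℂ] Nquot)
    (hact : ∀ (r x : Rpos), act r (Jsub.mkQ x) = Jsub.mkQ (r * x)) :
    Function.Surjective (TensorProduct.lift act) := by
  intro n
  obtain ⟨x, rfl⟩ := Jsub.mkQ_surjective n
  suffices h : Jsub.mkQ x ∈ LinearMap.range (TensorProduct.lift act) by
    exact h
  induction x using AddMonoidAlgebra.induction_linear with
  | zero => simp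
  | add f g hf hg =>
      rw [map_add]
      exact Submodule.add_mem _ hf hg
  | single a c =>
      have ha2 : (0:ℝ) < a.1 / 2 := by have := a.2; linarith
      refine ⟨(AddMonoidAlgebra.single ⟨a.1/2, ha2⟩ c) ⊗ₜ[ℂ]
        Jsub.mkQ (AddMonoidAlgebra.single ⟨a.1/2, ha2⟩ 1), ?_⟩
      rw [TensorProduct.lift.tmul, hact, AddMonoidAlgebra.single_mul_single]
      congr 2
      · ext
        show a.1/2 + a.1/2 = a.1
        ring
      · ring

/-- For `N = R/(ℂt + Rt)` over `R = ℂ[t^α | 0 < α ∈ ℝ]` (with the quotient action),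
the canonical map `R ⊗_R N → N` is surjective but not injective: the class of
`t^{1/2} ⊗ t^{1/2}` is a nonzero element of its kernel.  In particular `N` is not a
smooth `R`-module. -/
theorem quotient_not_smooth (act : Rpos →ₗ[ℂ] Nquot →ₗ[ℂ] Nquot)
    (hact : ∀ (r x : Rpos), act r (Jsub.mkQ x) = Jsub.mkQ (r * x)) :
    ∀ f : ((Rpos ⊗[ℂ] Nquot) ⧸ LinearMap.range (barDM act)) →ₗ[ℂ] Nquot,
      f ∘ₗ (LinearMap.range (barDM act)).mkQ = TensorProduct.lift act →
      Function.Surjective f ∧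
      (LinearMap.range (barDM act)).mkQ (tHalf ⊗ₜ[ℂ] Jsub.mkQ tHalf) ≠ 0 ∧
      f ((LinearMap.range (barDM act)).mkQ (tHalf ⊗ₜ[ℂ] Jsub.mkQ tHalf)) = 0 ∧
      ¬ Function.Injective f ∧ ¬ Function.Bijective f := by
  intro f hf
  have hfmk : ∀ y, f ((LinearMap.range (barDM act)).mkQ y) = TensorProduct.lift act y := by
    intro y
    exact congrFun (congrArg (fun g => DFunLike.coe g) hf) y
  have hsurj : Function.Surjective f := by
    intro n
    obtain ⟨y, hy⟩ := lift_act_surjective act hact n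
    exact ⟨(LinearMap.range (barDM act)).mkQ y, by rw [hfmk, hy]⟩
  have hne : (LinearMap.range (barDM act)).mkQ (tHalf ⊗ₜ[ℂ] Jsub.mkQ tHalf) ≠ 0 := by
    intro h0
    rw [Submodule.mkQ_apply, Submodule.Quotient.mk_eq_zero] at h0
    obtain ⟨z, hz⟩ := h0
    have h1 := phi_barDM act hact z
    rw [hz, phi_half] at h1
    exact one_ne_zero h1
  have hzero : f ((LinearMap.range (barDM act)).mkQ (tHalf ⊗ₜ[ℂ] Jsub.mkQ tHalf)) = 0 := by
    rw [hfmk, TensorProduct.lift.tmul, hact, tHalf_mul_tHalf]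
    rw [Submodule.mkQ_apply, Submodule.Quotient.mk_eq_zero]
    exact tElt_mem_Jsub
  have hninj : ¬ Function.Injective f := by
    intro hinj
    exact hne (hinj (by rw [hzero, map_zero]))
  exact ⟨hsurj, hne, hzero, hninj, fun hb => hninj hb.1⟩
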